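/- Let u∈C²(ℝ²×[0,T)) satisfy ‖u‖_{2,T}<∞. Then there exists a constant C₃>0, independent of u and T, such that |x|^{1/2}|u(x,t)| ≤ C₃‖u(t)‖₂ for all (x,t)∈ℝ²×[0,T). -/

import Mathlib

open Real MeasureTheory Filter
open scoped ENNReal

noncomputable section

/-- A space-time point `p = (x₁, x₂, t)`. -/
abbrev Pt : Type := ℝ × ℝ × ℝ

def dir3 : Fin 3 → Pt
  | 0 => (0, 0, 1)
  | 1 => (1, 0, 0)
  | 2 => (0, 1, 0)

/-- Partial derivative: `pd 0` is `∂_t`, `pd 1` is `∂_{x₁}`, `pd 2` is `∂_{x₂}`. -/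
def pd (α : Fin 3) (v : Pt → ℝ) : Pt → ℝ := fun p => fderiv ℝ v p (dir3 α)

/-- The vector fields `Γ₀ = ∂_t, Γ₁ = ∂₁, Γ₂ = ∂₂, Γ₃ = Ω = x₁∂₂ − x₂∂₁,
`Γ₄ = S = t∂_t + x₁∂₁ + x₂∂₂`. -/
def Gam : Fin 5 → (Pt → ℝ) → (Pt → ℝ)
  | 0 => pd 0
  | 1 => pd 1
  | 2 => pd 2
  | 3 => fun v p => p.1 * pd 2 v p - p.2.1 * pd 1 v p
  | 4 => fun v p => p.2.2 * pd 0 v p + p.1 * pd 1 v p + p.2.1 * pd 2 v p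

/-- The monomial `Γ^a = Γ₀^{a₀}Γ₁^{a₁}Γ₂^{a₂}Γ₃^{a₃}Γ₄^{a₄}`. -/
def GamPow (a : Fin 5 → ℕ) (v : Pt → ℝ) : Pt → ℝ :=
  (Gam 0)^[a 0] ((Gam 1)^[a 1] ((Gam 2)^[a 2] ((Gam 3)^[a 3] ((Gam 4)^[a 4] v))))

/-- Multi-indices `a` of length 5 with `|a| ≤ k`. -/
def MIdx (k : ℕ) : Finset (Fin 5 → ℕ) :=
  (Finset.range (k + 1)).biUnion fun n => Finset.Nat.antidiagonalTuple 5 n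

/-- The pointwise norm `|v(x,t)|_k = Σ_{|a| ≤ k} |Γ^a v(x,t)|`. -/
def ptNorm (k : ℕ) (v : Pt → ℝ) (p : Pt) : ℝ := ∑ a ∈ MIdx k, |GamPow a v p|

/-- `|x|`, the euclidean norm of the spatial part. -/
def rad (p : Pt) : ℝ := Real.sqrt (p.1 ^ 2 + p.2.1 ^ 2)

/-- The good derivative `Z_α^i = c_i ∂_α + (x_α/|x|) ∂_t` (for `α = 1, 2`). -/
def Zd (ci : ℝ) (α : Fin 3) (v : Pt → ℝ) (p : Pt) : ℝ :=
  ci * pd α v p + ((if α = 1 then p.1 else p.2.1) / rad p) * pd 0 v p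

/-- `|Z^i v| = |Z₁^i v| + |Z₂^i v|`. -/
def Znorm (ci : ℝ) (v : Pt → ℝ) (p : Pt) : ℝ := |Zd ci 1 v p| + |Zd ci 2 v p|

/-- The weighted `L²` norm `‖u(t)‖_k = Σ_{|a|≤k} (∫_{ℝ²} |Γ^a u(x,t)|² dx)^{1/2}`,
valued in `ℝ≥0∞`. -/
def l2Norm (k : ℕ) (u : Pt → ℝ) (t : ℝ) : ℝ≥0∞ :=
  ∑ a ∈ MIdx k,
    (∫⁻ x : ℝ × ℝ, ENNReal.ofReal ((GamPow a u (x.1, x.2, t)) ^ 2)) ^ ((1:ℝ) / 2)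


section Stmt13Aux
open Set
open scoped Interval

lemma lintegral_polar (f : ℝ × ℝ → ℝ≥0∞) :
    ∫⁻ p in polarCoord.target, ENNReal.ofReal p.1 * f (polarCoord.symm p) = ∫⁻ x, f x := by
  set B : ℝ × ℝ → ℝ × ℝ →L[ℝ] ℝ × ℝ := fun p =>
    LinearMap.toContinuousLinearMap (Matrix.toLin (Module.Basis.finTwoProd ℝ) (Module.Basis.finTwoProd ℝ)
      !![Real.cos p.2, -p.1 * Real.sin p.2; Real.sin p.2, p.1 * Real.cos p.2]) with hB
  have A : ∀ p ∈ polarCoord.target, HasFDerivWithinAt polarCoord.symm (B p) polarCoord.target p :=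
    fun p _ => (hasFDerivAt_polarCoord_symm p).hasFDerivWithinAt
  have B_det : ∀ p, (B p).det = p.1 := by
    intro p
    conv_rhs => rw [← one_mul p.1, ← cos_sq_add_sin_sq p.2]
    simp only [hB, neg_mul, LinearMap.det_toContinuousLinearMap, LinearMap.det_toLin,
      Matrix.det_fin_two_of, sub_neg_eq_add]
    ring
  have hinj : InjOn polarCoord.symm polarCoord.target := by
    have := polarCoord.symm.injOn
    rwa [OpenPartialHomeomorph.symm_source] at this
  have key := lintegral_image_eq_lintegral_abs_det_fderiv_mul volume
    polarCoord.open_target.measurableSet A hinj f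
  rw [polarCoord.symm_image_target_eq_source] at key
  have h1 : ∫⁻ x in polarCoord.source, f x = ∫⁻ x, f x := by
    have := setLIntegral_congr (μ := volume) (f := f) polarCoord_source_ae_eq_univ
    rwa [setLIntegral_univ] at this
  rw [h1] at key
  have h2 : ∫⁻ p in polarCoord.target, ENNReal.ofReal p.1 * f (polarCoord.symm p)
      = ∫⁻ p in polarCoord.target, ENNReal.ofReal |(B p).det| * f (polarCoord.symm p) := by
    apply setLIntegral_congr_fun polarCoord.open_target.measurableSet
    intro p hp
    beta_reduce
    rw [B_det, abs_of_pos hp.1]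
  rw [h2, ← key]

lemma ftc_bound {f f' G : ℝ → ℝ} (hd : ∀ s, HasDerivAt f (f' s) s) (hc : Continuous f')
    {S : Set ℝ} {a b : ℝ} (hab : uIcc a b ⊆ S)
    (hG : ∀ s ∈ S, |f' s| ≤ G s) :
    ENNReal.ofReal (f b) ≤ ENNReal.ofReal (f a) + ∫⁻ s in S, ENNReal.ofReal (G s) := by
  have hint : IntervalIntegrable f' volume a b := hc.intervalIntegrable a b
  have heq : ∫ s in a..b, f' s = f b - f a :=
    intervalIntegral.integral_eq_sub_of_hasDerivAt (fun x _ => hd x) hint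
  have h2 : |∫ s in a..b, f' s| ≤ ∫ s in Ι a b, |f' s| := by
    simpa [Real.norm_eq_abs] using
      intervalIntegral.norm_integral_le_integral_norm_uIoc (f := f') (a := a) (b := b) (μ := volume)
  have h1 : f b ≤ f a + ∫ s in Ι a b, |f' s| := by
    have := abs_nonneg (∫ s in a..b, f' s)
    have h3 : f b - f a ≤ |∫ s in a..b, f' s| := heq ▸ le_abs_self _
    linarith
  have hintabs : IntegrableOn (fun s => |f' s|) (Ι a b) volume := by
    apply Continuous.integrableOn_uIoc
    exact hc.abs
  calc ENNReal.ofReal (f b) ≤ ENNReal.ofReal (f a + ∫ s in Ι a b, |f' s|) :=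
        ENNReal.ofReal_le_ofReal h1
    _ ≤ ENNReal.ofReal (f a) + ENNReal.ofReal (∫ s in Ι a b, |f' s|) := ENNReal.ofReal_add_le
    _ ≤ ENNReal.ofReal (f a) + ∫⁻ s in S, ENNReal.ofReal (G s) := by
        gcongr
        rw [ofReal_integral_eq_lintegral_ofReal hintabs
          (Filter.Eventually.of_forall fun s => abs_nonneg _)]
        calc ∫⁻ s in Ι a b, ENNReal.ofReal |f' s| ≤ ∫⁻ s in Ι a b, ENNReal.ofReal (G s) := by
              apply setLIntegral_mono' measurableSet_uIoc
              intro s hs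
              exact ENNReal.ofReal_le_ofReal (hG s (hab (uIoc_subset_uIcc hs)))
          _ ≤ ∫⁻ s in S, ENNReal.ofReal (G s) := lintegral_mono_set (uIoc_subset_uIcc.trans hab)

lemma exists_small_of_infinite {S : Set ℝ} (hSm : MeasurableSet S) (hS : volume S = ⊤)
    {f : ℝ → ℝ≥0∞} (hf : ∫⁻ s in S, f s < ⊤) {ε : ℝ≥0∞} (hε : 0 < ε) :
    ∃ y ∈ S, f y ≤ ε := by
  by_contra h
  push_neg at h
  have : ∫⁻ s in S, ε ≤ ∫⁻ s in S, f s := by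
    apply setLIntegral_mono' hSm
    intro s hs
    exact (h s hs).le
  rw [setLIntegral_const, hS, ENNReal.mul_top hε.ne'] at this
  exact absurd (top_le_iff.mp this) hf.ne

lemma exists_le_mean {S : Set ℝ} (hSm : MeasurableSet S) (hS0 : 0 < volume S)
    (hS1 : 1 < volume S) (hSfin : volume S < ⊤) {f : ℝ → ℝ≥0∞} (hf : Measurable f)
    (hfin : ∫⁻ s in S, f s < ⊤) :
    ∃ y ∈ S, f y ≤ ∫⁻ s in S, f s := by
  by_contra h
  push_neg at h
  set M := ∫⁻ s in S, f s with hM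
  have hge : M * volume S ≤ M := by
    calc M * volume S = ∫⁻ _ in S, M := (setLIntegral_const S M).symm
      _ ≤ ∫⁻ s in S, f s := setLIntegral_mono' hSm fun s hs => (h s hs).le
  have hM0 : M = 0 := by
    by_contra h0
    have hle : volume S ≤ 1 := by
      nth_rewrite 2 [← mul_one M] at hge
      exact (ENNReal.mul_le_mul_iff_right h0 hfin.ne).mp hge
    exact absurd hle (not_le.mpr hS1)
  have hae : ∀ᵐ s ∂(volume.restrict S), f s = 0 := by
    have h0 : ∫⁻ s, f s ∂(volume.restrict S) = 0 := hM0 ▸ hM.symm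
    have := (lintegral_eq_zero_iff hf).mp h0
    filter_upwards [this] with s hs using hs
  have hmem : ∀ᵐ s ∂(volume.restrict S), s ∈ S := ae_restrict_mem hSm
  have hbad : ∀ᵐ _s ∂(volume.restrict S), False := by
    filter_upwards [hae, hmem] with s h1 h2
    have := h s h2
    rw [hM0, h1] at this
    exact lt_irrefl 0 this
  rw [Filter.eventually_false_iff_eq_bot, ae_eq_bot, Measure.restrict_eq_zero] at hbad
  exact absurd hbad (pos_iff_ne_zero.mp hS0)

lemma dense_of_null_compl {N : Set ℝ} (hN : volume N = 0) : Dense Nᶜ := by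
  rw [dense_iff_inter_open]
  intro U hU hUne
  by_contra h
  rw [not_nonempty_iff_eq_empty] at h
  have hsub : U ⊆ N := by
    intro x hx
    by_contra hxN
    exact absurd (Set.mem_inter hx hxN) (h ▸ Set.notMem_empty x)
  exact absurd (le_antisymm (hN ▸ measure_mono hsub) zero_le)
    (hU.measure_pos volume hUne).ne'

lemma ext_ae_line {f : ℝ × ℝ → ℝ} (hf : Continuous f) {B : ℝ}
    (h : ∀ᵐ y : ℝ, ∀ x, f (x, y) ≤ B) : ∀ z : ℝ × ℝ, f z ≤ B := by
  intro z
  rw [ae_iff] at h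
  have hd : Dense {y : ℝ | ¬∀ x, f (x, y) ≤ B}ᶜ := dense_of_null_compl h
  obtain ⟨c, hc, hlim⟩ := mem_closure_iff_seq_limit.mp (hd z.2)
  have hmem : ∀ n, f (z.1, c n) ≤ B := fun n => not_not.mp (hc n) z.1
  have htend : Tendsto (fun n => f (z.1, c n)) atTop (nhds (f z)) := by
    have h1 : Tendsto (fun n => ((z.1 : ℝ), c n)) atTop (nhds (z.1, z.2)) :=
      (tendsto_const_nhds).prodMk_nhds hlim
    exact (hf.continuousAt (x := z)).tendsto.comp h1
  exact le_of_tendsto htend (Filter.Eventually.of_forall hmem)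

lemma ext_ae_polar {f : ℝ × ℝ → ℝ} (hf : Continuous f) {B : ℝ}
    (h : ∀ᵐ θ ∂(volume.restrict (Ioo (-π) π)), ∀ r : ℝ, 1 ≤ r → f (r * cos θ, r * sin θ) ≤ B) :
    ∀ z : ℝ × ℝ, 1 ≤ z.1 ^ 2 + z.2 ^ 2 → f z ≤ B := by
  intro z hz
  rw [ae_iff] at h
  rw [Measure.restrict_apply' measurableSet_Ioo] at h
  set N := {θ | ¬∀ (r : ℝ), 1 ≤ r → f (r * cos θ, r * sin θ) ≤ B} ∩ Ioo (-π) π with hN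
  -- polar representation of z
  have hz0 : z ≠ 0 := by
    intro h0
    rw [h0] at hz
    norm_num at hz
  set w : ℂ := Complex.mk z.1 z.2 with hw
  have hwz : w ≠ 0 := by
    intro h0
    apply hz0
    have h1 : w.re = 0 := by rw [h0]; rfl
    have h2 : w.im = 0 := by rw [h0]; rfl
    exact Prod.ext h1 h2
  set ρ : ℝ := Real.sqrt (z.1 ^ 2 + z.2 ^ 2) with hρ
  have hρ1 : 1 ≤ ρ := by
    rw [hρ, show (1:ℝ) = Real.sqrt 1 by simp]
    exact Real.sqrt_le_sqrt hz
  have habs : ‖w‖ = ρ := by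
    rw [Complex.norm_def, Complex.normSq_mk]
    congr 1
    ring
  set α : ℝ := Complex.arg w with hα
  have hα_mem : α ∈ Set.Ioc (-π) π := ⟨Complex.neg_pi_lt_arg w, Complex.arg_le_pi w⟩
  have hρ0 : ρ ≠ 0 := by linarith
  have hre : w.re = z.1 := rfl
  have him : w.im = z.2 := rfl
  have hcos : ρ * Real.cos α = z.1 := by
    rw [hα, Complex.cos_arg hwz, habs, hre]
    field_simp
  have hsin : ρ * Real.sin α = z.2 := by
    rw [hα, Complex.sin_arg, habs, him]
    field_simp
  -- sequence of good angles approaching α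
  have hseq : ∀ n : ℕ, ∃ θ, θ ∈ Ioo (-π) π ∧ θ ∉ N ∧ |θ - α| < 1 / (n + 1) := by
    intro n
    set I := Ioo (max (-π) (α - 1 / (n + 1))) α with hI
    have hIsub : I ⊆ Ioo (-π) π := by
      intro θ hθ
      exact ⟨lt_of_le_of_lt (le_max_left _ _) hθ.1, lt_of_lt_of_le hθ.2 hα_mem.2⟩
    have hIne : (max (-π) (α - 1 / (n + 1))) < α := by
      apply max_lt hα_mem.1
      have : (0:ℝ) < 1 / (n + 1) := by positivity
      linarith
    have hpos : 0 < volume I := by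
      rw [hI, Real.volume_Ioo]
      simp only [ENNReal.ofReal_pos]
      linarith
    have : ¬ I ⊆ N := by
      intro hsub
      exact absurd (le_antisymm (h ▸ measure_mono hsub) zero_le) hpos.ne'
    obtain ⟨θ, hθI, hθN⟩ := Set.not_subset.mp this
    refine ⟨θ, hIsub hθI, hθN, ?_⟩
    rw [abs_sub_lt_iff]
    have hp : (0:ℝ) < 1 / (n + 1) := by positivity
    have h1 := hθI.1
    have h2 := hθI.2
    have h3 := le_max_right (-π) (α - 1 / (n + 1))
    constructor
    · linarith
    · linarith
  choose c hc1 hc2 hc3 using hseq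
  have hlim : Tendsto c atTop (nhds α) := by
    rw [tendsto_iff_dist_tendsto_zero]
    apply squeeze_zero (fun n => dist_nonneg) (fun n => (hc3 n).le)
    exact tendsto_one_div_add_atTop_nhds_zero_nat
  have hmem : ∀ n, f (ρ * Real.cos (c n), ρ * Real.sin (c n)) ≤ B := by
    intro n
    have := hc2 n
    rw [hN] at this
    have hgood : ∀ (r : ℝ), 1 ≤ r → f (r * Real.cos (c n), r * Real.sin (c n)) ≤ B := by
      by_contra hbad
      exact this ⟨hbad, hc1 n⟩
    exact hgood ρ hρ1
  have htend : Tendsto (fun n => f (ρ * Real.cos (c n), ρ * Real.sin (c n))) atTop (nhds (f z)) := by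
    have h1 : Tendsto (fun n => ((ρ * Real.cos (c n) : ℝ), (ρ * Real.sin (c n) : ℝ))) atTop
        (nhds (ρ * Real.cos α, ρ * Real.sin α)) := by
      apply Filter.Tendsto.prodMk_nhds
      · exact (tendsto_const_nhds).mul ((Real.continuous_cos.tendsto α).comp hlim)
      · exact (tendsto_const_nhds).mul ((Real.continuous_sin.tendsto α).comp hlim)
    rw [hcos, hsin] at h1
    have h2 : (z.1, z.2) = z := rfl
    rw [h2] at h1
    exact (hf.continuousAt.tendsto).comp h1
  exact le_of_tendsto htend (Filter.Eventually.of_forall hmem)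

abbrev V2 : Type := ℝ × ℝ

def d1 (v : V2 → ℝ) : V2 → ℝ := fun x => fderiv ℝ v x (1, 0)
def d2 (v : V2 → ℝ) : V2 → ℝ := fun x => fderiv ℝ v x (0, 1)
def om (v : V2 → ℝ) : V2 → ℝ := fun x => x.1 * d2 v x - x.2 * d1 v x

def sq2 (f : V2 → ℝ) : ℝ≥0∞ := ∫⁻ x : V2, ENNReal.ofReal (f x ^ 2)

section basic
variable {v : V2 → ℝ}

lemma contDiff_d1 (hv : ContDiff ℝ 2 v) : ContDiff ℝ 1 (d1 v) :=
  (hv.fderiv_right (by norm_num)).clm_apply contDiff_const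

lemma contDiff_d2 (hv : ContDiff ℝ 2 v) : ContDiff ℝ 1 (d2 v) :=
  (hv.fderiv_right (by norm_num)).clm_apply contDiff_const

lemma contDiff_om (hv : ContDiff ℝ 2 v) : ContDiff ℝ 1 (om v) := by
  unfold om
  exact (contDiff_fst.mul (contDiff_d2 hv)).sub (contDiff_snd.mul (contDiff_d1 hv))

lemma cont_d1' {w : V2 → ℝ} (hw : ContDiff ℝ 1 w) : Continuous (d1 w) := by
  have h0 : ContDiff ℝ 0 (fderiv ℝ w) := hw.fderiv_right (by norm_num)
  exact (h0.clm_apply contDiff_const).continuous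

lemma cont_d2' {w : V2 → ℝ} (hw : ContDiff ℝ 1 w) : Continuous (d2 w) := by
  have h0 : ContDiff ℝ 0 (fderiv ℝ w) := hw.fderiv_right (by norm_num)
  exact (h0.clm_apply contDiff_const).continuous

lemma cont_om' {w : V2 → ℝ} (hw : ContDiff ℝ 1 w) : Continuous (om w) := by
  unfold om
  exact (continuous_fst.mul (cont_d2' hw)).sub (continuous_snd.mul (cont_d1' hw))

lemma fderiv_eq_d {x : V2} (hv : DifferentiableAt ℝ v x) (y : V2) :
    fderiv ℝ v x y = y.1 * d1 v x + y.2 * d2 v x := by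
  have hy : (fderiv ℝ v x) y = (fderiv ℝ v x) (y.1 • ((1:ℝ), (0:ℝ)) + y.2 • ((0:ℝ), (1:ℝ))) := by
    congr 1
    ext <;> simp
  rw [hy, map_add, _root_.map_smul, _root_.map_smul]
  simp [d1, d2, smul_eq_mul]

lemma comp_curve {x : V2} (hv : DifferentiableAt ℝ v x) {γ : ℝ → V2} {g : V2} {t : ℝ}
    (hγ : HasDerivAt γ g t) (hx : γ t = x) :
    HasDerivAt (fun s => v (γ s)) (g.1 * d1 v x + g.2 * d2 v x) t := by
  subst hx
  have h := hv.hasFDerivAt.comp_hasDerivAt t hγ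
  rwa [fderiv_eq_d hv g] at h

lemma curve_s (θ s : ℝ) : HasDerivAt (fun s : ℝ => (s * Real.cos θ, s * Real.sin θ))
    ((Real.cos θ, Real.sin θ) : V2) s := by
  have h := ((hasDerivAt_id s).mul_const (Real.cos θ)).prodMk
    ((hasDerivAt_id s).mul_const (Real.sin θ))
  simpa using h

lemma curve_th (s θ : ℝ) : HasDerivAt (fun θ : ℝ => (s * Real.cos θ, s * Real.sin θ))
    ((-(s * Real.sin θ), s * Real.cos θ) : V2) θ := by
  exact ((Real.hasDerivAt_cos θ).const_mul s |>.congr_deriv (by ring)).prodMk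
    ((Real.hasDerivAt_sin θ).const_mul s |>.congr_deriv (by ring))

end basic

section second
variable {v : V2 → ℝ}

lemma diff_fderiv (hv : ContDiff ℝ 2 v) : Differentiable ℝ (fderiv ℝ v) :=
  (hv.fderiv_right (m := 1) (by norm_num)).differentiable one_ne_zero

lemma hasFDerivAt_dj (hv : ContDiff ℝ 2 v) (e : V2) (x : V2) :
    HasFDerivAt (fun y => fderiv ℝ v y e)
      ((ContinuousLinearMap.apply ℝ ℝ e).comp (fderiv ℝ (fderiv ℝ v) x)) x :=
  (ContinuousLinearMap.apply ℝ ℝ e).hasFDerivAt.comp x (diff_fderiv hv x).hasFDerivAt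

lemma hasFDerivAt_d1 (hv : ContDiff ℝ 2 v) (x : V2) :
    HasFDerivAt (d1 v)
      ((ContinuousLinearMap.apply ℝ ℝ ((1:ℝ),(0:ℝ))).comp (fderiv ℝ (fderiv ℝ v) x)) x :=
  hasFDerivAt_dj hv _ x

lemma hasFDerivAt_d2 (hv : ContDiff ℝ 2 v) (x : V2) :
    HasFDerivAt (d2 v)
      ((ContinuousLinearMap.apply ℝ ℝ ((0:ℝ),(1:ℝ))).comp (fderiv ℝ (fderiv ℝ v) x)) x :=
  hasFDerivAt_dj hv _ x

lemma schwarz (hv : ContDiff ℝ 2 v) (x : V2) : d1 (d2 v) x = d2 (d1 v) x := by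
  have hf : ∀ y, HasFDerivAt v (fderiv ℝ v y) y := fun y =>
    ((hv.differentiable (by norm_num)) y).hasFDerivAt
  have hx : HasFDerivAt (fderiv ℝ v) (fderiv ℝ (fderiv ℝ v) x) x :=
    (diff_fderiv hv x).hasFDerivAt
  have hsym := second_derivative_symmetric hf hx ((1:ℝ), (0:ℝ)) ((0:ℝ), (1:ℝ))
  simp only [d1, d2]
  rw [(hasFDerivAt_d2 hv x).fderiv, (hasFDerivAt_d1 hv x).fderiv]
  simpa using hsym

lemma d1_om (hv : ContDiff ℝ 2 v) (x : V2) :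
    d1 (om v) x = d2 v x + x.1 * d1 (d2 v) x - x.2 * d1 (d1 v) x := by
  have hom := ((hasFDerivAt_fst (𝕜 := ℝ) (p := x)).mul' (hasFDerivAt_d2 hv x)).sub
    ((hasFDerivAt_snd (𝕜 := ℝ) (p := x)).mul' (hasFDerivAt_d1 hv x))
  have key : d1 (om v) x = fderiv ℝ (fun y : V2 => y.1 * d2 v y - y.2 * d1 v y) x (1, 0) := rfl
  rw [key, (show HasFDerivAt (fun y : V2 => y.1 * d2 v y - y.2 * d1 v y) _ x from hom).fderiv]
  simp only [d1, d2]
  rw [(hasFDerivAt_d2 hv x).fderiv, (hasFDerivAt_d1 hv x).fderiv]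
  simp [ContinuousLinearMap.apply]
  ring

lemma d2_om (hv : ContDiff ℝ 2 v) (x : V2) :
    d2 (om v) x = x.1 * d2 (d2 v) x - d1 v x - x.2 * d2 (d1 v) x := by
  have hom := ((hasFDerivAt_fst (𝕜 := ℝ) (p := x)).mul' (hasFDerivAt_d2 hv x)).sub
    ((hasFDerivAt_snd (𝕜 := ℝ) (p := x)).mul' (hasFDerivAt_d1 hv x))
  have key : d2 (om v) x = fderiv ℝ (fun y : V2 => y.1 * d2 v y - y.2 * d1 v y) x (0, 1) := rfl
  rw [key, (show HasFDerivAt (fun y : V2 => y.1 * d2 v y - y.2 * d1 v y) _ x from hom).fderiv]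
  simp only [d1, d2]
  rw [(hasFDerivAt_d2 hv x).fderiv, (hasFDerivAt_d1 hv x).fderiv]
  simp [ContinuousLinearMap.apply]
  ring

lemma om_d1 (hv : ContDiff ℝ 2 v) (x : V2) : om (d1 v) x = d1 (om v) x - d2 v x := by
  rw [d1_om hv x, om]
  have hs := schwarz hv x
  rw [← hs]
  ring

lemma om_d2 (hv : ContDiff ℝ 2 v) (x : V2) : om (d2 v) x = d2 (om v) x + d1 v x := by
  rw [d2_om hv x, om]
  have hs := schwarz hv x
  rw [hs]
  ring

end second


section partI
variable {v : V2 → ℝ}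

lemma meas_ofReal_of_cont {f : V2 → ℝ} (hf : Continuous f) :
    Measurable fun z : V2 => ENNReal.ofReal (f z) :=
  (ENNReal.continuous_ofReal.comp hf).measurable

lemma lint_ofReal_add_le {f g : V2 → ℝ} (hf : Continuous f) :
    (∫⁻ z : V2, ENNReal.ofReal (f z + g z))
      ≤ (∫⁻ z : V2, ENNReal.ofReal (f z)) + ∫⁻ z : V2, ENNReal.ofReal (g z) := by
  calc (∫⁻ z : V2, ENNReal.ofReal (f z + g z))
      ≤ ∫⁻ z : V2, (ENNReal.ofReal (f z) + ENNReal.ofReal (g z)) :=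
        lintegral_mono fun z => ENNReal.ofReal_add_le
    _ = _ := lintegral_add_left (meas_ofReal_of_cont hf) _

lemma cont_slice_t {f : V2 → ℝ} (hf : Continuous f) (t : ℝ) :
    Continuous fun s => f (t, s) := hf.comp (continuous_const.prodMk continuous_id)

lemma cont_slice_y {f : V2 → ℝ} (hf : Continuous f) (y : ℝ) :
    Continuous fun s => f (s, y) := hf.comp (continuous_id.prodMk continuous_const)

lemma partI (hv : ContDiff ℝ 2 v) (x : V2) :
    ENNReal.ofReal (v x ^ 2) ≤ sq2 v + sq2 (d1 v) + sq2 (d2 v) + sq2 (d2 (d1 v)) := by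
  set R := sq2 v + sq2 (d1 v) + sq2 (d2 v) + sq2 (d2 (d1 v)) with hR
  rcases eq_or_ne R ⊤ with hT | hT
  · rw [hT]; exact le_top
  have hv1 : ContDiff ℝ 1 v := hv.of_le (by norm_num)
  have hcv : Continuous v := hv.continuous
  have hcd1 : Continuous (d1 v) := cont_d1' hv1
  have hcd2 : Continuous (d2 v) := cont_d2' hv1
  have hcd21 : Continuous (d2 (d1 v)) := cont_d2' (contDiff_d1 hv)
  have hfin : ∀ f : V2 → ℝ, sq2 f ≤ R → sq2 f ≠ ⊤ := fun f h => ne_top_of_le_ne_top hT h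
  have hfv : sq2 v ≠ ⊤ := by
    apply hfin
    rw [hR]
    exact le_add_of_le_of_nonneg (le_add_of_le_of_nonneg
      (le_add_of_le_of_nonneg le_rfl zero_le) zero_le) zero_le
  have hfd1 : sq2 (d1 v) ≠ ⊤ := by
    apply hfin
    rw [hR]
    exact le_add_of_le_of_nonneg (le_add_of_le_of_nonneg
      (le_add_of_nonneg_of_le zero_le le_rfl) zero_le) zero_le
  set G : ℝ → ℝ≥0∞ := fun y => ∫⁻ t : ℝ, ENNReal.ofReal (v (t, y) ^ 2 + d1 v (t, y) ^ 2)
    with hG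
  set G0 : ℝ → ℝ≥0∞ := fun y => ∫⁻ t : ℝ, ENNReal.ofReal (v (t, y) ^ 2) with hG0
  set D : ℝ≥0∞ := ∫⁻ z : V2, ENNReal.ofReal
    (v z ^ 2 + d2 v z ^ 2 + d1 v z ^ 2 + d2 (d1 v) z ^ 2) with hD
  have hmeas1 : Measurable fun z : V2 => ENNReal.ofReal (v z ^ 2 + d1 v z ^ 2) :=
    meas_ofReal_of_cont ((hcv.fun_pow 2).add (hcd1.fun_pow 2))
  have hG0meas : Measurable G0 := by
    rw [hG0]
    exact Measurable.lintegral_prod_left' (μ := (volume : Measure ℝ))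
      (meas_ofReal_of_cont (hcv.fun_pow 2))
  have hTon : (∫⁻ y : ℝ, G y) = ∫⁻ z : V2, ENNReal.ofReal (v z ^ 2 + d1 v z ^ 2) := by
    rw [hG, Measure.volume_eq_prod, lintegral_prod_symm _ hmeas1.aemeasurable]
  have hTon0 : (∫⁻ y : ℝ, G0 y) = sq2 v := by
    rw [hG0, sq2, Measure.volume_eq_prod,
      lintegral_prod_symm _ (meas_ofReal_of_cont (hcv.fun_pow 2)).aemeasurable]
  have hGfin : (∫⁻ y : ℝ, G y) < ⊤ := by
    rw [hTon]
    calc (∫⁻ z : V2, ENNReal.ofReal (v z ^ 2 + d1 v z ^ 2))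
        ≤ sq2 v + sq2 (d1 v) := lint_ofReal_add_le (hcv.fun_pow 2)
      _ < ⊤ := by
          rw [lt_top_iff_ne_top]
          exact ENNReal.add_ne_top.mpr ⟨hfv, hfd1⟩
  have hG0fin : ∀ᵐ y : ℝ, G0 y < ⊤ := by
    apply ae_lt_top hG0meas
    rw [hTon0]; exact hfv
  have hDR : D ≤ R := by
    rw [hD, hR]
    calc (∫⁻ z : V2, ENNReal.ofReal (v z ^ 2 + d2 v z ^ 2 + d1 v z ^ 2 + d2 (d1 v) z ^ 2))
        ≤ (∫⁻ z : V2, ENNReal.ofReal (v z ^ 2 + d2 v z ^ 2 + d1 v z ^ 2))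
            + sq2 (d2 (d1 v)) := lint_ofReal_add_le (((hcv.fun_pow 2).add (hcd2.fun_pow 2)).add (hcd1.fun_pow 2))
      _ ≤ ((∫⁻ z : V2, ENNReal.ofReal (v z ^ 2 + d2 v z ^ 2)) + sq2 (d1 v))
            + sq2 (d2 (d1 v)) := by
            gcongr ?_ + _
            exact lint_ofReal_add_le ((hcv.fun_pow 2).add (hcd2.fun_pow 2))
      _ ≤ ((sq2 v + sq2 (d2 v)) + sq2 (d1 v)) + sq2 (d2 (d1 v)) := by
            gcongr ?_ + _ + _
            exact lint_ofReal_add_le (hcv.fun_pow 2)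
      _ = sq2 v + sq2 (d1 v) + sq2 (d2 v) + sq2 (d2 (d1 v)) := by ring
  have hDfin : D ≠ ⊤ := ne_top_of_le_ne_top hT hDR
  have step2 : ∀ y y' : ℝ, G y ≤ G y' + D := by
    intro y y'
    have hpt : ∀ t : ℝ, ENNReal.ofReal (v (t, y) ^ 2 + d1 v (t, y) ^ 2)
        ≤ ENNReal.ofReal (v (t, y') ^ 2 + d1 v (t, y') ^ 2)
          + ∫⁻ s : ℝ, ENNReal.ofReal
            (v (t, s) ^ 2 + d2 v (t, s) ^ 2 + d1 v (t, s) ^ 2 + d2 (d1 v) (t, s) ^ 2) := by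
      intro t
      have hcurve : ∀ s : ℝ, HasDerivAt (fun s : ℝ => ((t : ℝ), s)) ((0, 1) : V2) s :=
        fun s => (hasDerivAt_const s t).prodMk (hasDerivAt_id s)
      have hder : ∀ s : ℝ, HasDerivAt (fun s => v (t, s) ^ 2 + d1 v (t, s) ^ 2)
          (2 * v (t, s) * d2 v (t, s) + 2 * d1 v (t, s) * d2 (d1 v) (t, s)) s := by
        intro s
        have h1 : HasDerivAt (fun s => v (t, s)) (d2 v (t, s)) s := by
          have := comp_curve (hv1.differentiable one_ne_zero (t, s)) (hcurve s) rfl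
          simpa using this
        have h2 : HasDerivAt (fun s => d1 v (t, s)) (d2 (d1 v) (t, s)) s := by
          have := comp_curve ((contDiff_d1 hv).differentiable one_ne_zero (t, s)) (hcurve s) rfl
          simpa using this
        have := (h1.fun_pow 2).fun_add (h2.fun_pow 2)
        refine this.congr_deriv ?_
        push_cast
        ring
      have hcont : Continuous fun s : ℝ =>
          2 * v (t, s) * d2 v (t, s) + 2 * d1 v (t, s) * d2 (d1 v) (t, s) :=
        ((continuous_const.mul (cont_slice_t hcv t)).mul (cont_slice_t hcd2 t)).add
          ((continuous_const.mul (cont_slice_t hcd1 t)).mul (cont_slice_t hcd21 t))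
      have habs : ∀ s : ℝ, s ∈ Set.univ →
          |2 * v (t, s) * d2 v (t, s) + 2 * d1 v (t, s) * d2 (d1 v) (t, s)|
            ≤ v (t, s) ^ 2 + d2 v (t, s) ^ 2 + d1 v (t, s) ^ 2 + d2 (d1 v) (t, s) ^ 2 := by
        intro s _
        rw [abs_le]
        constructor <;> nlinarith [sq_nonneg (v (t,s) + d2 v (t,s)),
          sq_nonneg (v (t,s) - d2 v (t,s)), sq_nonneg (d1 v (t,s) + d2 (d1 v) (t,s)),
          sq_nonneg (d1 v (t,s) - d2 (d1 v) (t,s))]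
      have := ftc_bound hder hcont (S := Set.univ) (a := y') (b := y) (subset_univ _) habs
      rwa [Measure.restrict_univ] at this
    calc G y ≤ ∫⁻ t : ℝ, (ENNReal.ofReal (v (t, y') ^ 2 + d1 v (t, y') ^ 2)
          + ∫⁻ s : ℝ, ENNReal.ofReal
            (v (t, s) ^ 2 + d2 v (t, s) ^ 2 + d1 v (t, s) ^ 2 + d2 (d1 v) (t, s) ^ 2)) :=
          lintegral_mono hpt
      _ = G y' + ∫⁻ t : ℝ, ∫⁻ s : ℝ, ENNReal.ofReal
            (v (t, s) ^ 2 + d2 v (t, s) ^ 2 + d1 v (t, s) ^ 2 + d2 (d1 v) (t, s) ^ 2) :=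
          lintegral_add_left ((ENNReal.continuous_ofReal.comp
            (((cont_slice_y hcv y').fun_pow 2).add ((cont_slice_y hcd1 y').fun_pow 2))).measurable) _
      _ = G y' + D := by
          rw [hD, Measure.volume_eq_prod, lintegral_prod _ (meas_ofReal_of_cont
            (f := fun z => v z ^ 2 + d2 v z ^ 2 + d1 v z ^ 2 + d2 (d1 v) z ^ 2) ((((hcv.fun_pow 2).add (hcd2.fun_pow 2)).add (hcd1.fun_pow 2)).add (hcd21.fun_pow 2))).aemeasurable]
  have hGD : ∀ y : ℝ, G y ≤ D := by
    intro y
    apply ENNReal.le_of_forall_pos_le_add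
    intro ε hε _
    have hGint : (∫⁻ y' in Set.univ, G y') < ⊤ := by rwa [Measure.restrict_univ]
    obtain ⟨y', _, hy'⟩ := exists_small_of_infinite MeasurableSet.univ Real.volume_univ hGint
      (ε := (ε : ℝ≥0∞)) (ENNReal.coe_pos.mpr hε)
    calc G y ≤ G y' + D := step2 y y'
      _ ≤ ε + D := by gcongr
      _ = D + ε := add_comm _ _
  have step1 : ∀ᵐ y : ℝ, ∀ t : ℝ, ENNReal.ofReal (v (t, y) ^ 2) ≤ D := by
    filter_upwards [hG0fin] with y hy
    intro t
    apply ENNReal.le_of_forall_pos_le_add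
    intro ε hε _
    have hint : (∫⁻ t' in Set.univ, ENNReal.ofReal (v (t', y) ^ 2)) < ⊤ := by
      rwa [Measure.restrict_univ]
    obtain ⟨y₀, _, hy₀⟩ := exists_small_of_infinite MeasurableSet.univ Real.volume_univ hint
      (ε := (ε : ℝ≥0∞)) (ENNReal.coe_pos.mpr hε)
    have hcurve : ∀ s : ℝ, HasDerivAt (fun s : ℝ => (s, (y : ℝ))) ((1, 0) : V2) s :=
      fun s => (hasDerivAt_id s).prodMk (hasDerivAt_const s y)
    have hder : ∀ s : ℝ, HasDerivAt (fun s => v (s, y) ^ 2)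
        (2 * v (s, y) * d1 v (s, y)) s := by
      intro s
      have h1 : HasDerivAt (fun s => v (s, y)) (d1 v (s, y)) s := by
        have := comp_curve (hv1.differentiable one_ne_zero (s, y)) (hcurve s) rfl
        simpa using this
      have := h1.fun_pow 2
      refine this.congr_deriv ?_
      push_cast
      ring
    have hcont : Continuous fun s : ℝ => 2 * v (s, y) * d1 v (s, y) :=
      (continuous_const.mul (cont_slice_y hcv y)).mul (cont_slice_y hcd1 y)
    have habs : ∀ s : ℝ, s ∈ Set.univ → |2 * v (s, y) * d1 v (s, y)|
        ≤ v (s, y) ^ 2 + d1 v (s, y) ^ 2 := by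
      intro s _
      rw [abs_le]
      constructor <;> nlinarith [sq_nonneg (v (s,y) + d1 v (s,y)), sq_nonneg (v (s,y) - d1 v (s,y))]
    have hftc := ftc_bound hder hcont (S := Set.univ) (a := y₀) (b := t) (subset_univ _) habs
    rw [Measure.restrict_univ] at hftc
    calc ENNReal.ofReal (v (t, y) ^ 2)
        ≤ ENNReal.ofReal (v (y₀, y) ^ 2) + ∫⁻ s : ℝ,
            ENNReal.ofReal (v (s, y) ^ 2 + d1 v (s, y) ^ 2) := hftc
      _ ≤ ε + G y := by gcongr
      _ ≤ ε + D := by gcongr; exact hGD y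
      _ = D + ε := add_comm _ _
  have hfinal : ∀ z : V2, v z ^ 2 ≤ D.toReal := by
    apply ext_ae_line (hcv.fun_pow 2)
    filter_upwards [step1] with y hy
    intro t
    exact (ENNReal.ofReal_le_iff_le_toReal hDfin).mp (hy t)
  calc ENNReal.ofReal (v x ^ 2) ≤ ENNReal.ofReal D.toReal :=
        ENNReal.ofReal_le_ofReal (hfinal x)
    _ = D := ENNReal.ofReal_toReal hDfin
    _ ≤ R := hDR

end partI

section partII
variable {v : V2 → ℝ}

/-- the polar point -/
def Pf (q : ℝ × ℝ) : V2 := (q.1 * Real.cos q.2, q.1 * Real.sin q.2)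

def wsf (v : V2 → ℝ) (q : ℝ × ℝ) : ℝ :=
  Real.cos q.2 * d1 v (Pf q) + Real.sin q.2 * d2 v (Pf q)

def gfun (v : V2 → ℝ) (q : ℝ × ℝ) : ℝ := q.1 * (2 * v (Pf q) ^ 2 + wsf v q ^ 2)

def qf (v : V2 → ℝ) (q : ℝ × ℝ) : ℝ :=
  Real.cos q.2 * d1 (om v) (Pf q) + Real.sin q.2 * d2 (om v) (Pf q)

def gqfun (v : V2 → ℝ) (q : ℝ × ℝ) : ℝ :=
  q.1 * (4 * v (Pf q) * om v (Pf q) + 2 * wsf v q * qf v q)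

lemma cont_Pf : Continuous Pf :=
  (continuous_fst.mul (Real.continuous_cos.comp continuous_snd)).prodMk
    (continuous_fst.mul (Real.continuous_sin.comp continuous_snd))

lemma cont_wsf (h1 : Continuous (d1 v)) (h2 : Continuous (d2 v)) : Continuous (wsf v) :=
  ((Real.continuous_cos.comp continuous_snd).mul (h1.comp cont_Pf)).add
    ((Real.continuous_sin.comp continuous_snd).mul (h2.comp cont_Pf))

lemma cont_gfun (hv : Continuous v) (h1 : Continuous (d1 v)) (h2 : Continuous (d2 v)) :
    Continuous (gfun v) :=
  continuous_fst.mul ((continuous_const.mul ((hv.comp cont_Pf).fun_pow 2)).add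
    ((cont_wsf h1 h2).fun_pow 2))

lemma cont_qf (h1 : Continuous (d1 (om v))) (h2 : Continuous (d2 (om v))) :
    Continuous (qf v) :=
  ((Real.continuous_cos.comp continuous_snd).mul (h1.comp cont_Pf)).add
    ((Real.continuous_sin.comp continuous_snd).mul (h2.comp cont_Pf))

lemma cont_gqfun (hv : Continuous v) (hom : Continuous (om v)) (h1 : Continuous (d1 v))
    (h2 : Continuous (d2 v)) (ho1 : Continuous (d1 (om v))) (ho2 : Continuous (d2 (om v))) :
    Continuous (gqfun v) :=
  continuous_fst.mul (((continuous_const.mul (hv.comp cont_Pf)).mul (hom.comp cont_Pf)).add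
    ((continuous_const.mul (cont_wsf h1 h2)).mul (cont_qf ho1 ho2)))

/-- s-derivative of `s ↦ v(P(s,θ))`. -/
lemma hasDerivAt_w_s (hv : ContDiff ℝ 2 v) (θ s : ℝ) :
    HasDerivAt (fun s' => v (Pf (s', θ))) (wsf v (s, θ)) s := by
  have hd : DifferentiableAt ℝ v (Pf (s, θ)) :=
    (hv.differentiable (by norm_num)) _
  have h := comp_curve hd (curve_s θ s) rfl
  simpa [Pf, wsf] using h

/-- θ-derivative of `θ ↦ v(P(s,θ))` is `om v`. -/
lemma hasDerivAt_w_th (hv : ContDiff ℝ 2 v) (s θ : ℝ) :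
    HasDerivAt (fun θ' => v (Pf (s, θ'))) (om v (Pf (s, θ))) θ := by
  have hd : DifferentiableAt ℝ v (Pf (s, θ)) :=
    (hv.differentiable (by norm_num)) _
  have h := comp_curve hd (curve_th s θ) rfl
  have : om v (Pf (s, θ)) = (-(s * Real.sin θ)) * d1 v (Pf (s, θ))
      + (s * Real.cos θ) * d2 v (Pf (s, θ)) := by
    simp only [om, Pf]
    ring
  rw [this]
  have h2 : (fun θ' => v (s * Real.cos θ', s * Real.sin θ')) = fun θ' => v (Pf (s, θ')) := rfl
  rw [h2] at h
  convert h using 1 <;> (try simp only [id_eq]) <;> try ring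

/-- θ-derivative of `θ ↦ w (P(s,θ))` for any C¹ function w, is `om w`. -/
lemma hasDerivAt_comp_th {w : V2 → ℝ} (hw : Differentiable ℝ w) (s θ : ℝ) :
    HasDerivAt (fun θ' => w (Pf (s, θ'))) (om w (Pf (s, θ))) θ := by
  have h := comp_curve (hw (Pf (s, θ))) (curve_th s θ) rfl
  have heq : om w (Pf (s, θ)) = (-(s * Real.sin θ)) * d1 w (Pf (s, θ))
      + (s * Real.cos θ) * d2 w (Pf (s, θ)) := by
    simp only [om, Pf]
    ring
  rw [heq]
  have h2 : (fun θ' => w (s * Real.cos θ', s * Real.sin θ')) = fun θ' => w (Pf (s, θ'))  := rfl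
  rw [h2] at h
  convert h using 1 <;> (try simp only [id_eq]) <;> try ring

/-- θ-derivative of `wsf`. -/
lemma hasDerivAt_wsf_th (hv : ContDiff ℝ 2 v) (s θ : ℝ) :
    HasDerivAt (fun θ' => wsf v (s, θ')) (qf v (s, θ)) θ := by
  have hd1 : Differentiable ℝ (d1 v) := (contDiff_d1 hv).differentiable one_ne_zero
  have hd2 : Differentiable ℝ (d2 v) := (contDiff_d2 hv).differentiable one_ne_zero
  have h1 : HasDerivAt (fun θ' => Real.cos θ' * d1 v (Pf (s, θ')))
      (-Real.sin θ * d1 v (Pf (s, θ)) + Real.cos θ * om (d1 v) (Pf (s, θ))) θ := by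
    have := (Real.hasDerivAt_cos θ).fun_mul (hasDerivAt_comp_th hd1 s θ)
    convert this using 1 <;> (try simp only [id_eq]) <;> try ring
  have h2 : HasDerivAt (fun θ' => Real.sin θ' * d2 v (Pf (s, θ')))
      (Real.cos θ * d2 v (Pf (s, θ)) + Real.sin θ * om (d2 v) (Pf (s, θ))) θ := by
    have := (Real.hasDerivAt_sin θ).fun_mul (hasDerivAt_comp_th hd2 s θ)
    convert this using 1 <;> (try simp only [id_eq]) <;> try ring
  have h := h1.add h2
  have heq : qf v (s, θ) = (-Real.sin θ * d1 v (Pf (s, θ)) + Real.cos θ * om (d1 v) (Pf (s, θ)))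
      + (Real.cos θ * d2 v (Pf (s, θ)) + Real.sin θ * om (d2 v) (Pf (s, θ))) := by
    rw [qf, om_d1 hv, om_d2 hv]
    ring
  rw [heq]
  exact h

/-- θ-derivative of `gfun`. -/
lemma hasDerivAt_gfun_th (hv : ContDiff ℝ 2 v) (s θ : ℝ) :
    HasDerivAt (fun θ' => gfun v (s, θ')) (gqfun v (s, θ)) θ := by
  have hw := hasDerivAt_w_th hv s θ
  have hws := hasDerivAt_wsf_th hv s θ
  have h := (((hw.fun_pow 2).const_mul 2).fun_add (hws.fun_pow 2)).const_mul s
  have heq : (fun θ' => gfun v (s, θ')) =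
      fun θ' => s * (2 * v (Pf (s, θ')) ^ 2 + wsf v (s, θ') ^ 2) := rfl
  rw [heq]
  refine h.congr_deriv ?_
  simp only [gqfun]
  push_cast
  ring

/-- s-derivative of `s ↦ s * v(P(s,θ))^2`. -/
lemma hasDerivAt_F (hv : ContDiff ℝ 2 v) (θ s : ℝ) :
    HasDerivAt (fun s' => s' * v (Pf (s', θ)) ^ 2)
      (v (Pf (s, θ)) ^ 2 + s * (2 * v (Pf (s, θ)) * wsf v (s, θ))) s := by
  have hw := hasDerivAt_w_s hv θ s
  have h := (hasDerivAt_id s).fun_mul (hw.fun_pow 2)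
  refine h.congr_deriv ?_
  simp only [id_eq]
  push_cast
  ring

end partII

section pointwise
variable {v : V2 → ℝ}

def Psi (v : V2 → ℝ) (z : V2) : ℝ := 2 * v z ^ 2 + d1 v z ^ 2 + d2 v z ^ 2

def Phi (v : V2 → ℝ) (z : V2) : ℝ :=
  2 * v z ^ 2 + 2 * om v z ^ 2 + d1 v z ^ 2 + d2 v z ^ 2
    + d1 (om v) z ^ 2 + d2 (om v) z ^ 2

lemma wsf_sq_le (q : ℝ × ℝ) : wsf v q ^ 2 ≤ d1 v (Pf q) ^ 2 + d2 v (Pf q) ^ 2 := by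
  have h := Real.sin_sq_add_cos_sq q.2
  rw [wsf]
  nlinarith [sq_nonneg (Real.sin q.2 * d1 v (Pf q) - Real.cos q.2 * d2 v (Pf q))]

lemma qf_sq_le (q : ℝ × ℝ) : qf v q ^ 2 ≤ d1 (om v) (Pf q) ^ 2 + d2 (om v) (Pf q) ^ 2 := by
  have h := Real.sin_sq_add_cos_sq q.2
  rw [qf]
  nlinarith [sq_nonneg (Real.sin q.2 * d1 (om v) (Pf q) - Real.cos q.2 * d2 (om v) (Pf q))]

lemma gfun_le {s θ : ℝ} (hs : 0 ≤ s) : gfun v (s, θ) ≤ s * Psi v (Pf (s, θ)) := by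
  rw [gfun, Psi]
  have h := wsf_sq_le (v := v) (s, θ)
  have : 2 * v (Pf (s, θ)) ^ 2 + wsf v (s, θ) ^ 2
      ≤ 2 * v (Pf (s, θ)) ^ 2 + d1 v (Pf (s, θ)) ^ 2 + d2 v (Pf (s, θ)) ^ 2 := by linarith
  exact mul_le_mul_of_nonneg_left this hs

lemma sw_le_gfun {s θ : ℝ} (hs : 0 ≤ s) : s * v (Pf (s, θ)) ^ 2 ≤ gfun v (s, θ) := by
  rw [gfun]
  have : v (Pf (s, θ)) ^ 2 ≤ 2 * v (Pf (s, θ)) ^ 2 + wsf v (s, θ) ^ 2 := by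
    nlinarith [sq_nonneg (v (Pf (s, θ))), sq_nonneg (wsf v (s, θ))]
  exact mul_le_mul_of_nonneg_left this hs

lemma gfun_nonneg {s θ : ℝ} (hs : 0 ≤ s) : 0 ≤ gfun v (s, θ) := by
  rw [gfun]
  positivity

lemma Fderiv_abs_le {s θ : ℝ} (hs : 1 ≤ s) :
    |v (Pf (s, θ)) ^ 2 + s * (2 * v (Pf (s, θ)) * wsf v (s, θ))| ≤ gfun v (s, θ) := by
  have h0 : (0:ℝ) ≤ s := le_trans zero_le_one hs
  rw [gfun, abs_le]
  constructor <;> nlinarith [mul_nonneg h0 (sq_nonneg (v (Pf (s, θ)) - wsf v (s, θ))),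
    mul_nonneg h0 (sq_nonneg (v (Pf (s, θ)) + wsf v (s, θ))),
    mul_nonneg (by linarith : (0:ℝ) ≤ s - 1) (sq_nonneg (v (Pf (s, θ))))]

lemma gq_abs_le {s θ : ℝ} (hs : 0 ≤ s) : |gqfun v (s, θ)| ≤ s * Phi v (Pf (s, θ)) := by
  set w := v (Pf (s, θ))
  set Om := om v (Pf (s, θ))
  set ws := wsf v (s, θ)
  set qq := qf v (s, θ)
  have h1 : |4 * w * Om + 2 * ws * qq| ≤ 2 * w ^ 2 + 2 * Om ^ 2 + ws ^ 2 + qq ^ 2 := by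
    rw [abs_le]
    constructor <;> nlinarith [sq_nonneg (w - Om), sq_nonneg (w + Om),
      sq_nonneg (ws - qq), sq_nonneg (ws + qq)]
  have h2 : 2 * w ^ 2 + 2 * Om ^ 2 + ws ^ 2 + qq ^ 2 ≤ Phi v (Pf (s, θ)) := by
    have ha := wsf_sq_le (v := v) (s, θ)
    have hb := qf_sq_le (v := v) (s, θ)
    rw [Phi]
    dsimp only [w, Om, ws, qq] at *
    linarith
  calc |gqfun v (s, θ)| = s * |4 * w * Om + 2 * ws * qq| := by
        rw [gqfun, abs_mul, abs_of_nonneg hs]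
    _ ≤ s * Phi v (Pf (s, θ)) := by
        apply mul_le_mul_of_nonneg_left _ hs
        exact le_trans h1 h2

end pointwise

section lintHelpers
variable {v : V2 → ℝ}

lemma lint_ofReal_two_mul {f : V2 → ℝ} (hf : Continuous f) :
    (∫⁻ z : V2, ENNReal.ofReal (2 * f z)) = 2 * ∫⁻ z : V2, ENNReal.ofReal (f z) := by
  have h : ∀ z : V2, ENNReal.ofReal (2 * f z) = 2 * ENNReal.ofReal (f z) := by
    intro z
    rw [ENNReal.ofReal_mul (by norm_num)]
    norm_num
  simp_rw [h]
  exact lintegral_const_mul 2 (meas_ofReal_of_cont hf)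

lemma lint_Psi_le (hcv : Continuous v) (h1 : Continuous (d1 v)) (h2 : Continuous (d2 v)) :
    (∫⁻ z : V2, ENNReal.ofReal (Psi v z)) ≤ 2 * sq2 v + sq2 (d1 v) + sq2 (d2 v) := by
  have e0 : (∫⁻ z : V2, ENNReal.ofReal (Psi v z))
      = ∫⁻ z : V2, ENNReal.ofReal (2 * v z ^ 2 + d1 v z ^ 2 + d2 v z ^ 2) := rfl
  rw [e0]
  calc (∫⁻ z : V2, ENNReal.ofReal (2 * v z ^ 2 + d1 v z ^ 2 + d2 v z ^ 2))
      ≤ (∫⁻ z : V2, ENNReal.ofReal (2 * v z ^ 2 + d1 v z ^ 2)) + sq2 (d2 v) :=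
        lint_ofReal_add_le ((continuous_const.mul (hcv.fun_pow 2)).add (h1.fun_pow 2))
    _ ≤ ((∫⁻ z : V2, ENNReal.ofReal (2 * v z ^ 2)) + sq2 (d1 v)) + sq2 (d2 v) := by
        gcongr ?_ + _
        exact lint_ofReal_add_le (continuous_const.mul (hcv.fun_pow 2))
    _ = 2 * sq2 v + sq2 (d1 v) + sq2 (d2 v) := by rw [lint_ofReal_two_mul (hcv.fun_pow 2)]; rfl

lemma lint_Phi_le (hcv : Continuous v) (h1 : Continuous (d1 v)) (h2 : Continuous (d2 v))
    (hom : Continuous (om v)) (ho1 : Continuous (d1 (om v))) (ho2 : Continuous (d2 (om v))) :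
    (∫⁻ z : V2, ENNReal.ofReal (Phi v z))
      ≤ 2 * sq2 v + 2 * sq2 (om v) + sq2 (d1 v) + sq2 (d2 v)
        + sq2 (d1 (om v)) + sq2 (d2 (om v)) := by
  have e0 : (∫⁻ z : V2, ENNReal.ofReal (Phi v z))
      = ∫⁻ z : V2, ENNReal.ofReal (2 * v z ^ 2 + 2 * om v z ^ 2 + d1 v z ^ 2 + d2 v z ^ 2
        + d1 (om v) z ^ 2 + d2 (om v) z ^ 2) := rfl
  rw [e0]
  calc (∫⁻ z : V2, ENNReal.ofReal (2 * v z ^ 2 + 2 * om v z ^ 2 + d1 v z ^ 2 + d2 v z ^ 2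
        + d1 (om v) z ^ 2 + d2 (om v) z ^ 2))
      ≤ (∫⁻ z : V2, ENNReal.ofReal (2 * v z ^ 2 + 2 * om v z ^ 2 + d1 v z ^ 2 + d2 v z ^ 2
        + d1 (om v) z ^ 2)) + sq2 (d2 (om v)) :=
        lint_ofReal_add_le (by
          exact ((((continuous_const.mul (hcv.fun_pow 2)).add
            (continuous_const.mul (hom.fun_pow 2))).add (h1.fun_pow 2)).add (h2.fun_pow 2)).add (ho1.fun_pow 2))
    _ ≤ ((∫⁻ z : V2, ENNReal.ofReal (2 * v z ^ 2 + 2 * om v z ^ 2 + d1 v z ^ 2 + d2 v z ^ 2))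
        + sq2 (d1 (om v))) + sq2 (d2 (om v)) := by
        gcongr ?_ + _
        exact lint_ofReal_add_le ((((continuous_const.mul (hcv.fun_pow 2)).add
          (continuous_const.mul (hom.fun_pow 2))).add (h1.fun_pow 2)).add (h2.fun_pow 2))
    _ ≤ (((∫⁻ z : V2, ENNReal.ofReal (2 * v z ^ 2 + 2 * om v z ^ 2 + d1 v z ^ 2))
        + sq2 (d2 v)) + sq2 (d1 (om v))) + sq2 (d2 (om v)) := by
        gcongr ?_ + _ + _
        exact lint_ofReal_add_le (((continuous_const.mul (hcv.fun_pow 2)).add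
          (continuous_const.mul (hom.fun_pow 2))).add (h1.fun_pow 2))
    _ ≤ ((((∫⁻ z : V2, ENNReal.ofReal (2 * v z ^ 2 + 2 * om v z ^ 2))
        + sq2 (d1 v)) + sq2 (d2 v)) + sq2 (d1 (om v))) + sq2 (d2 (om v)) := by
        gcongr ?_ + _ + _ + _
        exact lint_ofReal_add_le ((continuous_const.mul (hcv.fun_pow 2)).add
          (continuous_const.mul (hom.fun_pow 2)))
    _ ≤ (((((2 * sq2 v + 2 * sq2 (om v))
        + sq2 (d1 v)) + sq2 (d2 v)) + sq2 (d1 (om v))) + sq2 (d2 (om v))) := by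
        gcongr ?_ + _ + _ + _ + _
        calc (∫⁻ z : V2, ENNReal.ofReal (2 * v z ^ 2 + 2 * om v z ^ 2))
            ≤ (∫⁻ z : V2, ENNReal.ofReal (2 * v z ^ 2))
              + ∫⁻ z : V2, ENNReal.ofReal (2 * om v z ^ 2) :=
              lint_ofReal_add_le (continuous_const.mul (hcv.fun_pow 2))
          _ = 2 * sq2 v + 2 * sq2 (om v) := by
              rw [lint_ofReal_two_mul (hcv.fun_pow 2), lint_ofReal_two_mul (hom.fun_pow 2)]; rfl
    _ = 2 * sq2 v + 2 * sq2 (om v) + sq2 (d1 v) + sq2 (d2 v)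
        + sq2 (d1 (om v)) + sq2 (d2 (om v)) := by ring

lemma mem6 {a b c d e f : ℝ≥0∞} (h : a + b + c + d + e + f ≠ ⊤) :
    a ≠ ⊤ ∧ b ≠ ⊤ ∧ c ≠ ⊤ ∧ d ≠ ⊤ ∧ e ≠ ⊤ ∧ f ≠ ⊤ := by
  simp only [ENNReal.add_ne_top] at h
  exact ⟨h.1.1.1.1.1, h.1.1.1.1.2, h.1.1.1.2, h.1.1.2, h.1.2, h.2⟩

lemma comb6 {a b c d e f : ℝ≥0∞} :
    (2 * a + b + c) + (2 * a + 2 * d + b + c + e + f) ≤ 4 * (a + b + c + d + e + f) := by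
  have h1 : (2 * a + b + c) + (2 * a + 2 * d + b + c + e + f)
      = 4 * a + (2 * b + (2 * c + (2 * d + (e + f)))) := by ring
  have h2 : 4 * (a + b + c + d + e + f)
      = 4 * a + (4 * b + (4 * c + (4 * d + (4 * e + 4 * f)))) := by ring
  rw [h1, h2]
  refine add_le_add le_rfl (add_le_add ?_ (add_le_add ?_ (add_le_add ?_ (add_le_add ?_ ?_))))
  · exact mul_le_mul_left (by norm_num) b
  · exact mul_le_mul_left (by norm_num) c
  · exact mul_le_mul_left (by norm_num) d
  · exact le_mul_of_one_le_left zero_le (by norm_num)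
  · exact le_mul_of_one_le_left zero_le (by norm_num)

end lintHelpers

section partIImain
variable {v : V2 → ℝ}

lemma partII (hv : ContDiff ℝ 2 v) (x : V2) (hx : 1 ≤ x.1 ^ 2 + x.2 ^ 2) :
    ENNReal.ofReal (Real.sqrt (x.1 ^ 2 + x.2 ^ 2) * v x ^ 2)
      ≤ 4 * (sq2 v + sq2 (d1 v) + sq2 (d2 v) + sq2 (om v)
          + sq2 (d1 (om v)) + sq2 (d2 (om v))) := by
  set S6 := sq2 v + sq2 (d1 v) + sq2 (d2 v) + sq2 (om v) + sq2 (d1 (om v)) + sq2 (d2 (om v))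
    with hS6
  rcases eq_or_ne S6 ⊤ with hT | hT
  · rw [hT, ENNReal.mul_top (by norm_num)]
    exact le_top
  obtain ⟨hb1, hb2, hb3, hb4, hb5, hb6⟩ := mem6 (by rw [← hS6]; exact hT)
  have hv1 : ContDiff ℝ 1 v := hv.of_le (by norm_num)
  have hcv : Continuous v := hv.continuous
  have hcd1 : Continuous (d1 v) := cont_d1' hv1
  have hcd2 : Continuous (d2 v) := cont_d2' hv1
  have hcom : Continuous (om v) := cont_om' hv1
  have hcdo1 : Continuous (d1 (om v)) := cont_d1' (contDiff_om hv)
  have hcdo2 : Continuous (d2 (om v)) := cont_d2' (contDiff_om hv)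
  have hgmeas : Measurable fun q : ℝ × ℝ => ENNReal.ofReal (gfun v q) :=
    (ENNReal.continuous_ofReal.comp (cont_gfun hcv hcd1 hcd2)).measurable
  have hgqmeas : Measurable fun q : ℝ × ℝ => ENNReal.ofReal |gqfun v q| :=
    (ENNReal.continuous_ofReal.comp
      (cont_gqfun hcv hcom hcd1 hcd2 hcdo1 hcdo2).abs).measurable
  set h : ℝ → ℝ≥0∞ := fun θ => ∫⁻ s in Ioi 1, ENNReal.ofReal (gfun v (s, θ)) with hh
  set M : ℝ≥0∞ := ∫⁻ θ in Ioo (-π) π, h θ with hM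
  set D2 : ℝ≥0∞ := ∫⁻ q in (Ioi (1:ℝ)) ×ˢ (Icc (-π) π), ENNReal.ofReal |gqfun v q| with hD2
  have hmeas : Measurable h := by
    rw [hh]
    exact Measurable.lintegral_prod_left' (μ := volume.restrict (Ioi 1)) hgmeas
  -- Tonelli for M
  have hMprod : M = ∫⁻ q in (Ioi (1:ℝ)) ×ˢ (Ioo (-π) π), ENNReal.ofReal (gfun v q) := by
    rw [hM, hh, Measure.volume_eq_prod, ← Measure.prod_restrict,
      lintegral_prod_symm _ hgmeas.aemeasurable]
  -- bound M
  have hMle : M ≤ 2 * sq2 v + sq2 (d1 v) + sq2 (d2 v) := by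
    rw [hMprod]
    calc (∫⁻ q in (Ioi (1:ℝ)) ×ˢ (Ioo (-π) π), ENNReal.ofReal (gfun v q))
        ≤ ∫⁻ q in polarCoord.target, ENNReal.ofReal (gfun v q) := by
          rw [polarCoord_target]
          exact lintegral_mono_set
            (Set.prod_mono (Ioi_subset_Ioi (by norm_num)) (subset_refl _))
      _ ≤ ∫⁻ q in polarCoord.target,
            ENNReal.ofReal q.1 * ENNReal.ofReal (Psi v (polarCoord.symm q)) := by
          apply setLIntegral_mono' polarCoord.open_target.measurableSet
          intro q hq
          rw [polarCoord_target] at hq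
          have hq1 : (0:ℝ) < q.1 := hq.1
          have hps : polarCoord.symm q = Pf q := by
            rw [polarCoord_symm_apply]; rfl
          rw [hps, ← ENNReal.ofReal_mul hq1.le]
          exact ENNReal.ofReal_le_ofReal (gfun_le hq1.le)
      _ = ∫⁻ z : V2, ENNReal.ofReal (Psi v z) :=
            lintegral_polar (fun z => ENNReal.ofReal (Psi v z))
      _ ≤ 2 * sq2 v + sq2 (d1 v) + sq2 (d2 v) := lint_Psi_le hcv hcd1 hcd2
  have hMfin : M ≠ ⊤ := by
    apply ne_top_of_le_ne_top _ hMle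
    rw [ENNReal.add_ne_top, ENNReal.add_ne_top]
    exact ⟨⟨ENNReal.mul_ne_top (by norm_num) hb1, hb2⟩, hb3⟩
  -- bound D2
  have haeset : ((Ioi (1:ℝ)) ×ˢ (Icc (-π) π) : Set (ℝ × ℝ))
      =ᵐ[volume] ((Ioi (1:ℝ)) ×ˢ (Ioo (-π) π) : Set (ℝ × ℝ)) := by
    rw [MeasureTheory.ae_eq_set]
    constructor
    · rw [Set.prod_diff_prod, Set.diff_self, Set.empty_prod, Set.union_empty]
      have hsub : ((Ioi (1:ℝ)) ×ˢ (Icc (-π) π \ Ioo (-π) π) : Set (ℝ × ℝ))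
          ⊆ (Set.univ : Set ℝ) ×ˢ ({-π, π} : Set ℝ) := by
        apply Set.prod_mono (Set.subset_univ _)
        rw [Set.Icc_diff_Ioo_same (by linarith [Real.pi_pos])]
      apply measure_mono_null hsub
      rw [Measure.volume_eq_prod, Measure.prod_prod]
      have : volume ({-π, π} : Set ℝ) = 0 := by
        apply measure_union_null <;> exact Real.volume_singleton
      rw [this, mul_zero]
    · rw [Set.prod_diff_prod, Set.diff_self, Set.empty_prod, Set.union_empty]
      rw [Set.diff_eq_empty.mpr Set.Ioo_subset_Icc_self, Set.prod_empty]
      exact measure_empty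
  have hD2le : D2 ≤ 2 * sq2 v + 2 * sq2 (om v) + sq2 (d1 v) + sq2 (d2 v)
      + sq2 (d1 (om v)) + sq2 (d2 (om v)) := by
    rw [hD2, setLIntegral_congr haeset]
    calc (∫⁻ q in (Ioi (1:ℝ)) ×ˢ (Ioo (-π) π), ENNReal.ofReal |gqfun v q|)
        ≤ ∫⁻ q in polarCoord.target, ENNReal.ofReal |gqfun v q| := by
          rw [polarCoord_target]
          exact lintegral_mono_set
            (Set.prod_mono (Ioi_subset_Ioi (by norm_num)) (subset_refl _))
      _ ≤ ∫⁻ q in polarCoord.target,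
            ENNReal.ofReal q.1 * ENNReal.ofReal (Phi v (polarCoord.symm q)) := by
          apply setLIntegral_mono' polarCoord.open_target.measurableSet
          intro q hq
          rw [polarCoord_target] at hq
          have hq1 : (0:ℝ) < q.1 := hq.1
          have hps : polarCoord.symm q = Pf q := by
            rw [polarCoord_symm_apply]; rfl
          rw [hps, ← ENNReal.ofReal_mul hq1.le]
          exact ENNReal.ofReal_le_ofReal (gq_abs_le hq1.le)
      _ = ∫⁻ z : V2, ENNReal.ofReal (Phi v z) :=
            lintegral_polar (fun z => ENNReal.ofReal (Phi v z))
      _ ≤ _ := lint_Phi_le hcv hcd1 hcd2 hcom hcdo1 hcdo2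
  have hD2fin : D2 ≠ ⊤ := by
    apply ne_top_of_le_ne_top _ hD2le
    simp only [ENNReal.add_ne_top]
    exact ⟨⟨⟨⟨⟨ENNReal.mul_ne_top (by norm_num) hb1, ENNReal.mul_ne_top (by norm_num) hb4⟩,
      hb2⟩, hb3⟩, hb5⟩, hb6⟩
  set Btot : ℝ≥0∞ := M + D2 with hB
  have hBfin : Btot ≠ ⊤ := ENNReal.add_ne_top.mpr ⟨hMfin, hD2fin⟩
  -- step (b) : oscillation in θ
  have stepb : ∀ θ ∈ Ioo (-π) π, ∀ θ' ∈ Ioo (-π) π, h θ ≤ h θ' + D2 := by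
    intro θ hθ θ' hθ'
    have hpt : ∀ s : ℝ, ENNReal.ofReal (gfun v (s, θ)) ≤ ENNReal.ofReal (gfun v (s, θ'))
        + ∫⁻ t in Icc (-π) π, ENNReal.ofReal |gqfun v (s, t)| := by
      intro s
      have hder : ∀ t, HasDerivAt (fun t' => gfun v (s, t')) (gqfun v (s, t)) t :=
        fun t => hasDerivAt_gfun_th hv s t
      have hcont : Continuous fun t => gqfun v (s, t) :=
        (cont_gqfun hcv hcom hcd1 hcd2 hcdo1 hcdo2).comp
          (continuous_const.prodMk continuous_id)
      have hsub : uIcc θ' θ ⊆ Icc (-π) π := by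
        intro z hz
        rcases Set.mem_uIcc.mp hz with hz1 | hz1
        · exact ⟨by linarith [hz1.1, hθ'.1], by linarith [hz1.2, hθ.2]⟩
        · exact ⟨by linarith [hz1.1, hθ.1], by linarith [hz1.2, hθ'.2]⟩
      exact ftc_bound hder hcont hsub (fun t _ => le_refl _)
    calc h θ ≤ ∫⁻ s in Ioi 1, (ENNReal.ofReal (gfun v (s, θ'))
          + ∫⁻ t in Icc (-π) π, ENNReal.ofReal |gqfun v (s, t)|) := by
          rw [hh]
          exact lintegral_mono fun s => hpt s
      _ = h θ' + ∫⁻ s in Ioi 1, ∫⁻ t in Icc (-π) π, ENNReal.ofReal |gqfun v (s, t)| := by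
          rw [hh]
          exact lintegral_add_left ((ENNReal.continuous_ofReal.comp
            ((cont_gfun hcv hcd1 hcd2).comp (continuous_id.prodMk continuous_const))).measurable) _
      _ = h θ' + D2 := by
          rw [hD2, Measure.volume_eq_prod, ← Measure.prod_restrict,
            lintegral_prod _ hgqmeas.aemeasurable]
  -- choose a good θ'
  have hvol : volume (Ioo (-π) π) = ENNReal.ofReal (2 * π) := by
    rw [Real.volume_Ioo]
    congr 1
    ring
  have hvol0 : 0 < volume (Ioo (-π) π) := by
    rw [hvol]
    exact ENNReal.ofReal_pos.mpr (by positivity)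
  have hvol1 : 1 < volume (Ioo (-π) π) := by
    rw [hvol, show (1:ℝ≥0∞) = ENNReal.ofReal 1 by simp]
    exact (ENNReal.ofReal_lt_ofReal_iff (by positivity)).mpr (by nlinarith [Real.pi_gt_three])
  have hvolfin : volume (Ioo (-π) π) < ⊤ := by
    rw [hvol]
    exact ENNReal.ofReal_lt_top
  obtain ⟨θ', hθ'mem, hθ'le⟩ := exists_le_mean measurableSet_Ioo hvol0 hvol1 hvolfin hmeas
    (by rw [← hM]; exact hMfin.lt_top)
  -- step (a) and combination, a.e. in θ
  have hgood : ∀ᵐ θ ∂(volume.restrict (Ioo (-π) π)), ∀ r : ℝ, 1 ≤ r →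
      Real.sqrt ((r * Real.cos θ) ^ 2 + (r * Real.sin θ) ^ 2)
        * v (r * Real.cos θ, r * Real.sin θ) ^ 2 ≤ Btot.toReal := by
    have haefin : ∀ᵐ θ ∂(volume.restrict (Ioo (-π) π)), h θ < ⊤ :=
      ae_lt_top hmeas (by rw [← hM]; exact hMfin)
    have haemem : ∀ᵐ θ ∂(volume.restrict (Ioo (-π) π)), θ ∈ Ioo (-π) π :=
      ae_restrict_mem measurableSet_Ioo
    filter_upwards [haefin, haemem] with θ hθfin hθmem
    intro r hr
    have hr0 : (0:ℝ) ≤ r := by linarith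
    have hrr : Real.sqrt ((r * Real.cos θ) ^ 2 + (r * Real.sin θ) ^ 2) = r := by
      have he : (r * Real.cos θ) ^ 2 + (r * Real.sin θ) ^ 2 = r ^ 2 := by
        have := Real.sin_sq_add_cos_sq θ
        nlinarith
      rw [he, Real.sqrt_sq hr0]
    rw [hrr]
    rw [← ENNReal.ofReal_le_iff_le_toReal hBfin]
    have key : ENNReal.ofReal (r * v (Pf (r, θ)) ^ 2) ≤ h θ := by
      apply ENNReal.le_of_forall_pos_le_add
      intro ε hε _
      have hfinint : (∫⁻ s in Ioi r, ENNReal.ofReal (s * v (Pf (s, θ)) ^ 2)) < ⊤ := by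
        calc (∫⁻ s in Ioi r, ENNReal.ofReal (s * v (Pf (s, θ)) ^ 2))
            ≤ ∫⁻ s in Ioi r, ENNReal.ofReal (gfun v (s, θ)) := by
              apply setLIntegral_mono' measurableSet_Ioi
              intro s hs
              exact ENNReal.ofReal_le_ofReal (sw_le_gfun (by linarith [Set.mem_Ioi.mp hs]))
          _ ≤ ∫⁻ s in Ioi 1, ENNReal.ofReal (gfun v (s, θ)) :=
              lintegral_mono_set (Ioi_subset_Ioi hr)
          _ < ⊤ := hθfin
      obtain ⟨y, hy, hyε⟩ := exists_small_of_infinite measurableSet_Ioi Real.volume_Ioi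
        hfinint (ε := (ε : ℝ≥0∞)) (ENNReal.coe_pos.mpr hε)
      have hy1 : (1:ℝ) < y := lt_of_le_of_lt hr (Set.mem_Ioi.mp hy)
      have hder : ∀ s, HasDerivAt (fun s' => s' * v (Pf (s', θ)) ^ 2)
          (v (Pf (s, θ)) ^ 2 + s * (2 * v (Pf (s, θ)) * wsf v (s, θ))) s :=
        fun s => hasDerivAt_F hv θ s
      have hPs : Continuous fun s : ℝ => Pf (s, θ) :=
        cont_Pf.comp (continuous_id.prodMk continuous_const)
      have hcont : Continuous fun s : ℝ =>
          v (Pf (s, θ)) ^ 2 + s * (2 * v (Pf (s, θ)) * wsf v (s, θ)) := by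
        have hws : Continuous fun s : ℝ => wsf v (s, θ) :=
          (cont_wsf hcd1 hcd2).comp (continuous_id.prodMk continuous_const)
        exact ((hcv.comp hPs).fun_pow 2).add (continuous_id.mul
          ((continuous_const.mul (hcv.comp hPs)).mul hws))
      have hsub : uIcc y r ⊆ Ici (1:ℝ) := by
        intro z hz
        rcases Set.mem_uIcc.mp hz with hz1 | hz1
        · exact le_trans (by linarith) hz1.1
        · exact le_trans hr hz1.1
      have hG : ∀ s ∈ Ici (1:ℝ),
          |v (Pf (s, θ)) ^ 2 + s * (2 * v (Pf (s, θ)) * wsf v (s, θ))| ≤ gfun v (s, θ) :=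
        fun s hs => Fderiv_abs_le hs
      have hftc := ftc_bound hder hcont (S := Ici 1) (a := y) (b := r) hsub hG
      have hIci : (∫⁻ s in Ici (1:ℝ), ENNReal.ofReal (gfun v (s, θ))) = h θ := by
        rw [hh]
        exact setLIntegral_congr (Ioi_ae_eq_Ici (a := (1:ℝ))).symm
      calc ENNReal.ofReal (r * v (Pf (r, θ)) ^ 2)
          ≤ ENNReal.ofReal (y * v (Pf (y, θ)) ^ 2)
            + ∫⁻ s in Ici (1:ℝ), ENNReal.ofReal (gfun v (s, θ)) := hftc
        _ ≤ ε + h θ := by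
            rw [hIci]
            gcongr
        _ = h θ + ε := add_comm _ _
    calc ENNReal.ofReal (r * v (r * Real.cos θ, r * Real.sin θ) ^ 2)
        ≤ h θ := key
      _ ≤ h θ' + D2 := stepb θ hθmem θ' hθ'mem
      _ ≤ M + D2 := by gcongr
      _ = Btot := hB.symm
  -- extension to all points
  have hcontf : Continuous fun z : V2 => Real.sqrt (z.1 ^ 2 + z.2 ^ 2) * v z ^ 2 :=
    (Real.continuous_sqrt.comp ((continuous_fst.fun_pow 2).add (continuous_snd.fun_pow 2))).mul
      (hcv.fun_pow 2)
  have hext := ext_ae_polar hcontf hgood x hx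
  calc ENNReal.ofReal (Real.sqrt (x.1 ^ 2 + x.2 ^ 2) * v x ^ 2)
      ≤ ENNReal.ofReal Btot.toReal := ENNReal.ofReal_le_ofReal hext
    _ = Btot := ENNReal.ofReal_toReal hBfin
    _ ≤ (2 * sq2 v + sq2 (d1 v) + sq2 (d2 v)) + (2 * sq2 v + 2 * sq2 (om v) + sq2 (d1 v)
        + sq2 (d2 v) + sq2 (d1 (om v)) + sq2 (d2 (om v))) := add_le_add hMle hD2le
    _ ≤ 4 * S6 := by rw [hS6]; exact comb6

end partIImain

section wrapper

def eT (t : ℝ) : V2 → Pt := fun x => (x.1, x.2, t)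

def LTmap : V2 →L[ℝ] ℝ × ℝ × ℝ :=
  (ContinuousLinearMap.fst ℝ ℝ ℝ).prod (((ContinuousLinearMap.snd ℝ ℝ ℝ)).prod 0)

lemma hasFDerivAt_eT (t : ℝ) (x : V2) : HasFDerivAt (eT t) LTmap x := by
  apply HasFDerivAt.prodMk hasFDerivAt_fst
  exact hasFDerivAt_snd.prodMk (hasFDerivAt_const t x)

lemma isOpenS (T : ℝ) : IsOpen {p : Pt | p.2.2 < T} :=
  isOpen_lt (continuous_snd.snd) continuous_const

variable {u : Pt → ℝ} {T t : ℝ}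

lemma memS (ht : t < T) (x : V2) : eT t x ∈ {p : Pt | p.2.2 < T} := ht

lemma slice_contDiff (hu : ContDiffOn ℝ 2 u {p : Pt | p.2.2 < T}) (ht : t < T) :
    ContDiff ℝ 2 (fun x => u (eT t x)) := by
  rw [← contDiffOn_univ]
  apply ContDiffOn.comp hu
    ((contDiff_fst.prodMk (contDiff_snd.prodMk contDiff_const)).contDiffOn)
  intro x _
  exact ht

lemma diffAt_u (hu : ContDiffOn ℝ 2 u {p : Pt | p.2.2 < T}) {p : Pt} (hp : p.2.2 < T) :
    DifferentiableAt ℝ u p :=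
  (hu.contDiffAt ((isOpenS T).mem_nhds hp)).differentiableAt (by norm_num)

lemma contDiffOn_fderiv_u (hu : ContDiffOn ℝ 2 u {p : Pt | p.2.2 < T}) :
    ContDiffOn ℝ 1 (fderiv ℝ u) {p : Pt | p.2.2 < T} := by
  have h2 : ContDiffOn ℝ ((1:ℕ) + 1) u {p : Pt | p.2.2 < T} := by
    exact_mod_cast hu
  exact ((contDiffOn_succ_iff_fderiv_of_isOpen (isOpenS T)).mp h2).2.2

lemma contDiffOn_pd (hu : ContDiffOn ℝ 2 u {p : Pt | p.2.2 < T}) (α : Fin 3) :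
    ContDiffOn ℝ 1 (pd α u) {p : Pt | p.2.2 < T} :=
  (contDiffOn_fderiv_u hu).clm_apply contDiffOn_const

lemma diffAt_pd (hu : ContDiffOn ℝ 2 u {p : Pt | p.2.2 < T}) (α : Fin 3) {p : Pt}
    (hp : p.2.2 < T) : DifferentiableAt ℝ (pd α u) p :=
  (((contDiffOn_pd hu α).differentiableOn one_ne_zero).differentiableAt
    ((isOpenS T).mem_nhds hp))

lemma diffAt_Gam3 (hu : ContDiffOn ℝ 2 u {p : Pt | p.2.2 < T}) {p : Pt} (hp : p.2.2 < T) :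
    DifferentiableAt ℝ (Gam 3 u) p := by
  have he : Gam 3 u = fun q : Pt => q.1 * pd 2 u q - q.2.1 * pd 1 u q := rfl
  rw [he]
  exact (differentiableAt_fst.mul (diffAt_pd hu 2 hp)).sub
    ((differentiableAt_snd.fst).mul (diffAt_pd hu 1 hp))

lemma d1_comp_eT {f : Pt → ℝ} {x : V2} (hf : DifferentiableAt ℝ f (eT t x)) :
    d1 (fun y => f (eT t y)) x = pd 1 f (eT t x) := by
  have h := (hf.hasFDerivAt.comp x (hasFDerivAt_eT t x)).fderiv
  have he : d1 (fun y => f (eT t y)) x = fderiv ℝ (f ∘ eT t) x (1, 0) := rfl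
  rw [he, h]
  rfl

lemma d2_comp_eT {f : Pt → ℝ} {x : V2} (hf : DifferentiableAt ℝ f (eT t x)) :
    d2 (fun y => f (eT t y)) x = pd 2 f (eT t x) := by
  have h := (hf.hasFDerivAt.comp x (hasFDerivAt_eT t x)).fderiv
  have he : d2 (fun y => f (eT t y)) x = fderiv ℝ (f ∘ eT t) x (0, 1) := rfl
  rw [he, h]
  rfl

variable (hu : ContDiffOn ℝ 2 u {p : Pt | p.2.2 < T}) (ht : t < T)

lemma slice_d1 (hu : ContDiffOn ℝ 2 u {p : Pt | p.2.2 < T}) (ht : t < T) :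
    d1 (fun x => u (eT t x)) = fun x => pd 1 u (eT t x) :=
  funext fun x => d1_comp_eT (diffAt_u hu (memS ht x))

lemma slice_d2 (hu : ContDiffOn ℝ 2 u {p : Pt | p.2.2 < T}) (ht : t < T) :
    d2 (fun x => u (eT t x)) = fun x => pd 2 u (eT t x) :=
  funext fun x => d2_comp_eT (diffAt_u hu (memS ht x))

lemma slice_d1d2 (hu : ContDiffOn ℝ 2 u {p : Pt | p.2.2 < T}) (ht : t < T) (x : V2) :
    d1 (d2 (fun x => u (eT t x))) x = pd 1 (pd 2 u) (eT t x) := by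
  rw [slice_d2 hu ht]
  exact d1_comp_eT (diffAt_pd hu 2 (memS ht x))

lemma slice_om (hu : ContDiffOn ℝ 2 u {p : Pt | p.2.2 < T}) (ht : t < T) :
    om (fun x => u (eT t x)) = fun x => Gam 3 u (eT t x) := by
  funext x
  have h1 : om (fun x => u (eT t x)) x
      = x.1 * d2 (fun x => u (eT t x)) x - x.2 * d1 (fun x => u (eT t x)) x := rfl
  rw [h1, slice_d1 hu ht, slice_d2 hu ht]
  rfl

lemma slice_d1om (hu : ContDiffOn ℝ 2 u {p : Pt | p.2.2 < T}) (ht : t < T) (x : V2) :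
    d1 (om (fun x => u (eT t x))) x = pd 1 (Gam 3 u) (eT t x) := by
  rw [slice_om hu ht]
  exact d1_comp_eT (diffAt_Gam3 hu (memS ht x))

lemma slice_d2om (hu : ContDiffOn ℝ 2 u {p : Pt | p.2.2 < T}) (ht : t < T) (x : V2) :
    d2 (om (fun x => u (eT t x))) x = pd 2 (Gam 3 u) (eT t x) := by
  rw [slice_om hu ht]
  exact d2_comp_eT (diffAt_Gam3 hu (memS ht x))

end wrapper

section gampow

variable {u : Pt → ℝ}

lemma gp_zero : GamPow ![0,0,0,0,0] u = u := rfl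
lemma gp_1 : GamPow ![0,1,0,0,0] u = pd 1 u := rfl
lemma gp_2 : GamPow ![0,0,1,0,0] u = pd 2 u := rfl
lemma gp_12 : GamPow ![0,1,1,0,0] u = pd 1 (pd 2 u) := rfl
lemma gp_3 : GamPow ![0,0,0,1,0] u = Gam 3 u := rfl
lemma gp_13 : GamPow ![0,1,0,1,0] u = pd 1 (Gam 3 u) := rfl
lemma gp_23 : GamPow ![0,0,1,1,0] u = pd 2 (Gam 3 u) := rfl

lemma mem_MIdx2 (a : Fin 5 → ℕ) (h : ∃ n, n ≤ 2 ∧ ∑ i, a i = n) : a ∈ MIdx 2 := by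
  obtain ⟨n, hn, hsum⟩ := h
  rw [MIdx, Finset.mem_biUnion]
  exact ⟨n, Finset.mem_range.mpr (by omega), Finset.Nat.mem_antidiagonalTuple.mpr hsum⟩

lemma mem_a0 : (![0,0,0,0,0] : Fin 5 → ℕ) ∈ MIdx 2 := mem_MIdx2 _ ⟨0, by norm_num, by decide⟩
lemma mem_a1 : (![0,1,0,0,0] : Fin 5 → ℕ) ∈ MIdx 2 := mem_MIdx2 _ ⟨1, by norm_num, by decide⟩
lemma mem_a2 : (![0,0,1,0,0] : Fin 5 → ℕ) ∈ MIdx 2 := mem_MIdx2 _ ⟨1, by norm_num, by decide⟩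
lemma mem_a12 : (![0,1,1,0,0] : Fin 5 → ℕ) ∈ MIdx 2 := mem_MIdx2 _ ⟨2, by norm_num, by decide⟩
lemma mem_a3 : (![0,0,0,1,0] : Fin 5 → ℕ) ∈ MIdx 2 := mem_MIdx2 _ ⟨1, by norm_num, by decide⟩
lemma mem_a13 : (![0,1,0,1,0] : Fin 5 → ℕ) ∈ MIdx 2 := mem_MIdx2 _ ⟨2, by norm_num, by decide⟩
lemma mem_a23 : (![0,0,1,1,0] : Fin 5 → ℕ) ∈ MIdx 2 := mem_MIdx2 _ ⟨2, by norm_num, by decide⟩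

lemma term_le_l2Norm {t : ℝ} {a : Fin 5 → ℕ} (ha : a ∈ MIdx 2) :
    (∫⁻ x : ℝ × ℝ, ENNReal.ofReal ((GamPow a u (x.1, x.2, t)) ^ 2)) ^ ((1:ℝ) / 2)
      ≤ l2Norm 2 u t := by
  rw [l2Norm]
  exact Finset.single_le_sum (f := fun a =>
    (∫⁻ x : ℝ × ℝ, ENNReal.ofReal ((GamPow a u (x.1, x.2, t)) ^ 2)) ^ ((1:ℝ) / 2))
    (fun i _ => zero_le) ha

lemma sq_le_of_rpow_le {X N : ℝ≥0∞} (h : X ^ ((1:ℝ)/2) ≤ N) : X ≤ N ^ (2:ℝ) := by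
  have h2 := ENNReal.rpow_le_rpow h (by norm_num : (0:ℝ) ≤ 2)
  rwa [← ENNReal.rpow_mul, show ((1:ℝ)/2) * 2 = 1 by norm_num, ENNReal.rpow_one] at h2

end gampow

section finalHelpers

lemma ofReal_abs_le_sqrt {c : ℝ} {B : ℝ≥0∞} (h : ENNReal.ofReal (c ^ 2) ≤ B) :
    ENNReal.ofReal |c| ≤ B ^ ((1:ℝ)/2) := by
  have h1 : ENNReal.ofReal (c ^ 2) = (ENNReal.ofReal |c|) ^ (2:ℝ) := by
    rw [← sq_abs, ENNReal.ofReal_pow (abs_nonneg c), ← ENNReal.rpow_natCast]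
    norm_num
  rw [h1] at h
  have h2 := ENNReal.rpow_le_rpow h (by norm_num : (0:ℝ) ≤ 1/2)
  rwa [← ENNReal.rpow_mul, show (2:ℝ) * (1/2) = 1 by norm_num, ENNReal.rpow_one] at h2

lemma rpow_two_natCast (a : ℝ≥0∞) : a ^ (2:ℝ) = a ^ (2:ℕ) := by
  rw [show (2:ℝ) = ((2:ℕ):ℝ) from by norm_num, ENNReal.rpow_natCast]

lemma rpow_half_four_mul (N : ℝ≥0∞) : (4 * N ^ (2:ℝ)) ^ ((1:ℝ)/2) ≤ 5 * N := by
  rw [ENNReal.mul_rpow_of_nonneg _ _ (by norm_num : (0:ℝ) ≤ 1/2),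
    ← ENNReal.rpow_mul, show (2:ℝ) * (1/2) = 1 by norm_num, ENNReal.rpow_one]
  apply mul_le_mul_left
  have h4 : (4:ℝ≥0∞) = (2:ℝ≥0∞) ^ (2:ℝ) := by
    rw [rpow_two_natCast]
    norm_num
  rw [h4, ← ENNReal.rpow_mul, show (2:ℝ) * (1/2) = 1 by norm_num, ENNReal.rpow_one]
  norm_num

lemma rpow_half_24_mul (N : ℝ≥0∞) : (24 * N ^ (2:ℝ)) ^ ((1:ℝ)/2) ≤ 5 * N := by
  rw [ENNReal.mul_rpow_of_nonneg _ _ (by norm_num : (0:ℝ) ≤ 1/2),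
    ← ENNReal.rpow_mul, show (2:ℝ) * (1/2) = 1 by norm_num, ENNReal.rpow_one]
  apply mul_le_mul_left
  calc (24:ℝ≥0∞) ^ ((1:ℝ)/2) ≤ (25:ℝ≥0∞) ^ ((1:ℝ)/2) :=
        ENNReal.rpow_le_rpow (by norm_num) (by norm_num)
    _ = 5 := by
        have h25 : (25:ℝ≥0∞) = (5:ℝ≥0∞) ^ (2:ℝ) := by
          rw [rpow_two_natCast]
          norm_num
        rw [h25, ← ENNReal.rpow_mul, show (2:ℝ) * (1/2) = 1 by norm_num, ENNReal.rpow_one]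

end finalHelpers


end Stmt13Aux

open Set in
/-- Klainerman-type weighted Sobolev inequality:
if `u ∈ C²(ℝ²×[0,T))` and `‖u‖_{2,T} < ∞`, then
`|x|^{1/2}|u(x,t)| ≤ C₃ ‖u(t)‖₂`, with `C₃` independent of `u` and `T`. -/
theorem stmt13 :
    ∃ C : ℝ, 0 < C ∧ ∀ T : ℝ, 0 < T → ∀ u : Pt → ℝ,
      ContDiffOn ℝ 2 u {p : Pt | p.2.2 < T} →
      (⨆ (t : ℝ) (_ : 0 ≤ t ∧ t < T), l2Norm 2 u t) < ⊤ →
      ∀ p : Pt, 0 ≤ p.2.2 → p.2.2 < T →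
        ENNReal.ofReal (Real.sqrt (rad p) * |u p|)
          ≤ ENNReal.ofReal C * l2Norm 2 u p.2.2 := by
  refine ⟨5, by norm_num, ?_⟩
  intro T hT u hu _hsup p _hp0 hpT
  set t := p.2.2 with htdef
  set N := l2Norm 2 u t with hN
  set v : V2 → ℝ := fun x => u (eT t x) with hv
  have hvC2 : ContDiff ℝ 2 v := slice_contDiff hu hpT
  set x : V2 := (p.1, p.2.1) with hx
  have hup : v x = u p := rfl
  have key : ∀ (f : V2 → ℝ) (a : Fin 5 → ℕ), a ∈ MIdx 2 →
      (∀ y : V2, f y = GamPow a u (eT t y)) → sq2 f ≤ N ^ (2:ℝ) := by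
    intro f a ha hf
    apply sq_le_of_rpow_le
    have he : sq2 f = ∫⁻ z : ℝ × ℝ, ENNReal.ofReal ((GamPow a u (z.1, z.2, t)) ^ 2) := by
      apply lintegral_congr
      intro y
      rw [hf y]
      rfl
    calc (sq2 f) ^ ((1:ℝ)/2)
        = (∫⁻ z : ℝ × ℝ, ENNReal.ofReal ((GamPow a u (z.1, z.2, t)) ^ 2)) ^ ((1:ℝ)/2) := by
          rw [he]
      _ ≤ N := term_le_l2Norm ha
  have k0 : sq2 v ≤ N ^ (2:ℝ) := key v _ mem_a0 (fun y => rfl)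
  have k1 : sq2 (d1 v) ≤ N ^ (2:ℝ) := key _ _ mem_a1 (fun y => by
    rw [gp_1]; exact congrFun (slice_d1 hu hpT) y)
  have k2 : sq2 (d2 v) ≤ N ^ (2:ℝ) := key _ _ mem_a2 (fun y => by
    rw [gp_2]; exact congrFun (slice_d2 hu hpT) y)
  have k12 : sq2 (d1 (d2 v)) ≤ N ^ (2:ℝ) := key _ _ mem_a12 (fun y => by
    rw [gp_12]; exact slice_d1d2 hu hpT y)
  have k3 : sq2 (om v) ≤ N ^ (2:ℝ) := key _ _ mem_a3 (fun y => by
    rw [gp_3]; exact congrFun (slice_om hu hpT) y)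
  have k13 : sq2 (d1 (om v)) ≤ N ^ (2:ℝ) := key _ _ mem_a13 (fun y => by
    rw [gp_13]; exact slice_d1om hu hpT y)
  have k23 : sq2 (d2 (om v)) ≤ N ^ (2:ℝ) := key _ _ mem_a23 (fun y => by
    rw [gp_23]; exact slice_d2om hu hpT y)
  have k21 : sq2 (d2 (d1 v)) ≤ N ^ (2:ℝ) := by
    have he : sq2 (d2 (d1 v)) = sq2 (d1 (d2 v)) :=
      lintegral_congr fun y => by rw [schwarz hvC2 y]
    rw [he]
    exact k12
  have hC5 : ENNReal.ofReal (5:ℝ) = (5:ℝ≥0∞) := by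
    norm_num
  rw [hC5]
  by_cases hr : p.1 ^ 2 + p.2.1 ^ 2 ≤ 1
  · -- small radius
    have hrad1 : rad p ≤ 1 := by
      rw [rad, show (1:ℝ) = Real.sqrt 1 by simp]
      exact Real.sqrt_le_sqrt hr
    have hs1 : Real.sqrt (rad p) ≤ 1 := by
      rw [show (1:ℝ) = Real.sqrt 1 by simp]
      exact Real.sqrt_le_sqrt hrad1
    have hA : ENNReal.ofReal (v x ^ 2) ≤ 4 * N ^ (2:ℝ) := by
      calc ENNReal.ofReal (v x ^ 2)
          ≤ sq2 v + sq2 (d1 v) + sq2 (d2 v) + sq2 (d2 (d1 v)) := partI hvC2 x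
        _ ≤ N ^ (2:ℝ) + N ^ (2:ℝ) + N ^ (2:ℝ) + N ^ (2:ℝ) := by gcongr
        _ = 4 * N ^ (2:ℝ) := by ring
    have habs : ENNReal.ofReal |u p| ≤ (4 * N ^ (2:ℝ)) ^ ((1:ℝ)/2) := by
      apply ofReal_abs_le_sqrt
      rw [← hup]
      exact hA
    calc ENNReal.ofReal (Real.sqrt (rad p) * |u p|)
        ≤ ENNReal.ofReal |u p| := by
          apply ENNReal.ofReal_le_ofReal
          exact mul_le_of_le_one_left (abs_nonneg _) hs1
      _ ≤ (4 * N ^ (2:ℝ)) ^ ((1:ℝ)/2) := habs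
      _ ≤ 5 * N := rpow_half_four_mul N
  · -- large radius
    push_neg at hr
    have hx1 : 1 ≤ x.1 ^ 2 + x.2 ^ 2 := le_of_lt hr
    have hB : ENNReal.ofReal (Real.sqrt (x.1 ^ 2 + x.2 ^ 2) * v x ^ 2) ≤ 24 * N ^ (2:ℝ) := by
      calc ENNReal.ofReal (Real.sqrt (x.1 ^ 2 + x.2 ^ 2) * v x ^ 2)
          ≤ 4 * (sq2 v + sq2 (d1 v) + sq2 (d2 v) + sq2 (om v)
              + sq2 (d1 (om v)) + sq2 (d2 (om v))) := partII hvC2 x hx1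
        _ ≤ 4 * (N ^ (2:ℝ) + N ^ (2:ℝ) + N ^ (2:ℝ) + N ^ (2:ℝ) + N ^ (2:ℝ) + N ^ (2:ℝ)) := by
            gcongr
        _ = 24 * N ^ (2:ℝ) := by ring
    have hradx : Real.sqrt (x.1 ^ 2 + x.2 ^ 2) = rad p := rfl
    have hsq : (Real.sqrt (rad p) * |u p|) ^ 2 = Real.sqrt (x.1 ^ 2 + x.2 ^ 2) * v x ^ 2 := by
      rw [hradx, hup, mul_pow, sq_abs, Real.sq_sqrt (show (0:ℝ) ≤ rad p from Real.sqrt_nonneg _)]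
    have habs : ENNReal.ofReal (abs (Real.sqrt (rad p) * |u p|)) ≤ (24 * N ^ (2:ℝ)) ^ ((1:ℝ)/2) := by
      apply ofReal_abs_le_sqrt
      rw [hsq]
      exact hB
    have hnn : (0:ℝ) ≤ Real.sqrt (rad p) * |u p| :=
      mul_nonneg (Real.sqrt_nonneg _) (abs_nonneg _)
    rw [abs_of_nonneg hnn] at habs
    calc ENNReal.ofReal (Real.sqrt (rad p) * |u p|)
        ≤ (24 * N ^ (2:ℝ)) ^ ((1:ℝ)/2) := habs
      _ ≤ 5 * N := rpow_half_24_mul N
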